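/- arXiv:1805.10925 — 2 statements merged into one kernel-verified Lean document; each statement's English description precedes it below -/
import Mathlib

section
/- Let Φ be a finite collection of convex cones in ℚⁿ and λ, λ₁, λ₂ convex cones such that every ω ∈ Φ contains λ. If the cone generated by λ ∪ λ₁ meets the interior of λ₂ nontrivially and the cone generated by λ ∪ λ₂ meets the interior of λ₁ nontrivially, and each ω ∈ Φ is a convex cone containing any cone whose interior it meets, then {ω ∈ Φ : λ₁ ⊆ ω} = {ω ∈ Φ : λ₂ ⊆ ω}. -/
/-- Let `Φ` be a finite collection of convex cones in `ℚⁿ`, each containing a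
fixed cone `lam`. Suppose the cone generated by `lam ∪ lam₁` meets the interior
of `lam₂` and the cone generated by `lam ∪ lam₂` meets the interior of `lam₁`,
and each `ω ∈ Φ` contains any of `lam₁, lam₂` whose interior it meets. Then
`{ω ∈ Φ : lam₁ ⊆ ω} = {ω ∈ Φ : lam₂ ⊆ ω}`. -/
theorem stmt_6 (n : ℕ) (Φ : Set (Set (Fin n → ℚ))) (hfin : Φ.Finite)
    (lam lam₁ lam₂ : Set (Fin n → ℚ))
    (hcone : ∀ ω ∈ Φ, ∀ x ∈ ω, ∀ y ∈ ω, ∀ a b : ℚ, 0 ≤ a → 0 ≤ b →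
      a • x + b • y ∈ ω)
    (hlam : ∀ ω ∈ Φ, lam ⊆ ω)
    (hmeet₁ : ∀ ω ∈ Φ, (ω ∩ interior lam₁).Nonempty → lam₁ ⊆ ω)
    (hmeet₂ : ∀ ω ∈ Φ, (ω ∩ interior lam₂).Nonempty → lam₂ ⊆ ω)
    (hgen₁ : ({z | ∃ x ∈ lam, ∃ y ∈ lam₁, ∃ a b : ℚ, 0 ≤ a ∧ 0 ≤ b ∧
        z = a • x + b • y} ∩ interior lam₂).Nonempty)
    (hgen₂ : ({z | ∃ x ∈ lam, ∃ y ∈ lam₂, ∃ a b : ℚ, 0 ≤ a ∧ 0 ≤ b ∧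
        z = a • x + b • y} ∩ interior lam₁).Nonempty) :
    {ω | ω ∈ Φ ∧ lam₁ ⊆ ω} = {ω | ω ∈ Φ ∧ lam₂ ⊆ ω} := by
  ext ω
  simp only [Set.mem_setOf_eq]
  constructor
  · rintro ⟨hω, h₁⟩
    refine ⟨hω, hmeet₂ ω hω ?_⟩
    obtain ⟨z, ⟨x, hx, y, hy, a, b, ha, hb, hz⟩, hzint⟩ := hgen₁
    exact ⟨z, hz ▸ hcone ω hω x (hlam ω hω hx) y (h₁ hy) a b ha hb, hzint⟩
  · rintro ⟨hω, h₂⟩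
    refine ⟨hω, hmeet₁ ω hω ?_⟩
    obtain ⟨z, ⟨x, hx, y, hy, a, b, ha, hb, hz⟩, hzint⟩ := hgen₂
    exact ⟨z, hz ▸ hcone ω hω x (hlam ω hω hx) y (h₂ hy) a b ha hb, hzint⟩
end

section
/- Let f₁,…,f_r be homogeneous elements of a ℤ²-graded ring with degrees w₁,…,w_r lying in a pointed cone, and let λ be a 2-dimensional subcone. Any monomial f₁^{a₁}···f_r^{a_r} whose degree lies in the relative interior of λ and which involves at least one variable must involve some f_i with w_i ≤ λ or the degree of every involved f_i lies in λ; in particular, if w ∈ λ° satisfies w < w_i for every w_i ∈ λ°, then every monomial of degree in ℤ₊·w involves at least one f_i with w_i ≤ λ. -/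
/-- The cross product in `ℚ²`. -/
def cross (x y : ℚ × ℚ) : ℚ := x.1 * y.2 - x.2 * y.1

lemma cross_def (x y : ℚ × ℚ) : cross x y = x.1 * y.2 - x.2 * y.1 := rfl

/-- `cross x ·` as a linear map. -/
def crossMap (x : ℚ × ℚ) : (ℚ × ℚ) →ₗ[ℚ] ℚ where
  toFun y := cross x y
  map_add' a b := by simp [cross_def]; ring
  map_smul' c a := by simp [cross_def, Prod.smul_fst, Prod.smul_snd, smul_eq_mul]; ring

lemma cross_right (x u v : ℚ × ℚ) (α β : ℚ) :
    cross x (α • u + β • v) = α * cross x u + β * cross x v := by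
  have := (crossMap x).map_add (α • u) (β • v)
  simpa [crossMap, map_smul, smul_eq_mul] using this

lemma cross_antisym (x y : ℚ × ℚ) : cross x y = - cross y x := by
  simp [cross_def]; ring

lemma myCross_self (x : ℚ × ℚ) : cross x x = 0 := by simp [cross_def]; ring

/-- decomposition of any vector in the basis `u, v`. -/
lemma decomp (u v x : ℚ × ℚ) (hD : cross u v ≠ 0) :
    x = (cross x v / cross u v) • u + (cross u x / cross u v) • v := by
  have h1 : (cross x v / cross u v) * u.1 + (cross u x / cross u v) * v.1 = x.1 := by
    field_simp
    simp [cross_def]; ring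
  have h2 : (cross x v / cross u v) * u.2 + (cross u x / cross u v) * v.2 = x.2 := by
    field_simp
    simp [cross_def]; ring
  ext
  · simpa using h1.symm
  · simpa using h2.symm

/-- Let `w₁,…,w_r` be degrees lying in a pointed convex cone `C ⊆ ℚ²`, and let
`λ = cone(u,v)` be a two-dimensional subcone. If `wc ∈ λ°` satisfies
`wc < w_i` for every `w_i ∈ λ°`, then every monomial (exponent vector
`a : Fin r → ℕ`) of degree a positive multiple of `wc` involves at least one
`f_i` with `w_i ≤ λ`, i.e. `a i ≠ 0` and `cross (w i) z ≥ 0` for all `z ∈ λ`. -/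
theorem stmt_9 (r : ℕ) (w : Fin r → ℚ × ℚ) (u v wc : ℚ × ℚ)
    (C : Set (ℚ × ℚ))
    (hsmul : ∀ x ∈ C, ∀ q : ℚ, 0 ≤ q → q • x ∈ C)
    (hadd : ∀ x ∈ C, ∀ y ∈ C, x + y ∈ C)
    (hpointed : ∀ x ∈ C, -x ∈ C → x = 0)
    (hw : ∀ i, w i ∈ C) (hu : u ∈ C) (hv : v ∈ C)
    (horient : 0 < cross u v)
    (hwc : ∃ α β : ℚ, 0 < α ∧ 0 < β ∧ wc = α • u + β • v)
    (hlt : ∀ i, (∃ α β : ℚ, 0 < α ∧ 0 < β ∧ w i = α • u + β • v) →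
      0 < cross wc (w i)) :
    ∀ (a : Fin r → ℕ) (m : ℕ), 0 < m →
      (∑ i, (a i : ℚ) • w i = (m : ℚ) • wc) →
      ∃ i, a i ≠ 0 ∧
        ∀ z, (∃ α β : ℚ, 0 ≤ α ∧ 0 ≤ β ∧ z = α • u + β • v) →
          0 ≤ cross (w i) z := by
  obtain ⟨αc, βc, hαc, hβc, hwceq⟩ := hwc
  set D := cross u v with hDdef
  have hD : D ≠ 0 := ne_of_gt horient
  intro a m hm hsum
  by_contra hcon
  push_neg at hcon
  -- hcon : ∀ i, a i ≠ 0 → ∃ z, (∃ α β, 0 ≤ α ∧ 0 ≤ β ∧ z = α•u+β•v) ∧ cross (w i) z < 0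
  have hpos : ∀ i, a i ≠ 0 → 0 < cross wc (w i) := by
    intro i hi
    obtain ⟨z, ⟨α, β, hα, hβ, hz⟩, hneg⟩ := hcon i hi
    set x := w i with hxdef
    set cu := cross x u with hcu
    set cv := cross x v with hcv
    have hux : cross u x = -cu := by rw [cross_antisym u x]
    have hxdec : x = (cv / D) • u + (-cu / D) • v := by
      have h := decomp u v x hD
      rw [hux] at h
      exact h
    have hwcx : cross wc x = -(αc * cu + βc * cv) := by
      rw [hwceq, cross_antisym, cross_right]
    -- not (cu ≥ 0 ∧ cv ≥ 0), otherwise contradicts hneg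
    have hnotboth : ¬ (0 ≤ cu ∧ 0 ≤ cv) := by
      rintro ⟨h1, h2⟩
      have : 0 ≤ cross x z := by
        rw [hz, cross_right, ← hcu, ← hcv]
        positivity
      linarith
    rcases le_or_gt 0 cu with h1 | h1
    · -- cu ≥ 0, hence cv < 0 : pointedness contradiction
      have h2 : cv < 0 := by
        by_contra h2
        exact hnotboth ⟨h1, le_of_not_gt h2⟩
      exfalso
      have hmx : -x = (-cv / D) • u + (cu / D) • v := by
        rw [hxdec]
        ext <;> simp [Prod.smul_fst, Prod.smul_snd, smul_eq_mul] <;> ring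
      have hmem : -x ∈ C := by
        rw [hmx]
        refine hadd _ (hsmul u hu _ ?_) _ (hsmul v hv _ ?_)
        · exact le_of_lt (div_pos (by linarith) horient)
        · exact div_nonneg h1 (le_of_lt horient)
      have hx0 : x = 0 := hpointed x (hw i) hmem
      have : cv = 0 := by rw [hcv, hx0]; simp [cross_def]
      linarith
    · -- cu < 0
      rcases lt_trichotomy cv 0 with h2 | h2 | h2
      · -- after λ : compute directly
        rw [hwcx]; nlinarith
      · -- cv = 0 : x on the ray of v
        rw [hwcx, h2]; nlinarith
      · -- strictly inside : use hlt
        apply hlt i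
        refine ⟨cv / D, -cu / D, div_pos h2 horient, div_pos (by linarith) horient, ?_⟩
        rw [← hxdec]
  -- now derive the contradiction from the degree equation
  have hsum' : ∑ i, (a i : ℚ) * cross wc (w i) = 0 := by
    have h1 : crossMap wc (∑ i, (a i : ℚ) • w i) = ∑ i, (a i : ℚ) * cross wc (w i) := by
      rw [map_sum]
      refine Finset.sum_congr rfl fun i _ => ?_
      simp [crossMap, smul_eq_mul]
    have h2 : crossMap wc ((m : ℚ) • wc) = 0 := by
      simp [crossMap, smul_eq_mul, myCross_self]
    rw [← h1, hsum, h2]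
  have hterm : ∀ i ∈ Finset.univ, 0 ≤ (a i : ℚ) * cross wc (w i) := by
    intro i _
    rcases eq_or_ne (a i) 0 with h | h
    · simp [h]
    · exact le_of_lt (mul_pos (by exact_mod_cast Nat.pos_of_ne_zero h) (hpos i h))
  have hall : ∀ i ∈ Finset.univ, (a i : ℚ) * cross wc (w i) = 0 :=
    (Finset.sum_eq_zero_iff_of_nonneg hterm).mp hsum'
  have ha0 : ∀ i, a i = 0 := by
    intro i
    by_contra h
    have := hall i (Finset.mem_univ i)
    have h1 : (0:ℚ) < (a i : ℚ) := by exact_mod_cast Nat.pos_of_ne_zero h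
    have h2 := hpos i h
    nlinarith
  have : (0 : ℚ × ℚ) = (m : ℚ) • wc := by
    rw [← hsum]
    exact (Finset.sum_eq_zero (fun i _ => by rw [ha0 i]; simp)).symm
  have hwc0 : wc = 0 := by
    have hm' : (m : ℚ) ≠ 0 := by exact_mod_cast hm.ne'
    have := this.symm
    rwa [smul_eq_zero, or_iff_right hm'] at this
  have h6 : cross (αc • u + βc • v) v = αc * cross u v := by
    simp [cross_def, Prod.smul_fst, Prod.smul_snd, smul_eq_mul]
    ring
  have h5 : (0 : ℚ × ℚ) = αc • u + βc • v := hwc0 ▸ hwceq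
  rw [← h5] at h6
  have h7 : cross (0 : ℚ × ℚ) v = 0 := by simp [cross_def]
  nlinarith [mul_pos hαc horient]
end
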